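/- Let (U,d) be a bounded metric space and (E,‖·‖) a Banach algebra. Suppose f_0,...,f_n, h_0,...,h_n : U → E satisfy ‖f_k(x)‖ ≤ c₁(k)‖h_k(x)‖ for all x ∈ U and ‖f_k(x) − f_k(y)‖ ≤ c₂(k)‖h_k(x)‖ d(x,y) for all x,y ∈ U, with positive constants c₁(k), c₂(k). Then ‖∏_{k=0}^n f_k(x) − ∏_{k=0}^n f_k(y)‖ ≤ C · (∏_{i=0}^n ‖h_i(x)‖) · d(x,y) for all x,y ∈ U, where C = Σ_{i=0}^n (∏_{j=0}^{i-1} c₁(j)) c₂(i) (∏_{j=i+1}^n (c₁(j) + c₂(j)·diam U)). -/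

import Mathlib

open Finset

/-- Norm of a product of a `Fin (n+1)`-indexed family bounded by product of bounds. -/
lemma aux_prod_norm_le {E : Type*} [NormedRing E] (n : ℕ) (g : Fin (n + 1) → E)
    (b : Fin (n + 1) → ℝ) (hb : ∀ k, ‖g k‖ ≤ b k) :
    ‖(List.ofFn g).prod‖ ≤ ∏ k : Fin (n + 1), b k := by
  calc ‖(List.ofFn g).prod‖ ≤ ((List.ofFn g).map norm).prod := by
        apply List.norm_prod_le'
        simp [List.ofFn_eq_nil_iff]
    _ = ∏ k : Fin (n + 1), ‖g k‖ := by
        rw [List.map_ofFn, List.prod_ofFn]; rfl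
    _ ≤ ∏ k : Fin (n + 1), b k := by
        apply Finset.prod_le_prod (fun k _ => norm_nonneg _) (fun k _ => hb k)

lemma aux_const_succ (n : ℕ) (c₁ c₂ : Fin (n + 2) → ℝ) (D : ℝ) :
    (∑ i : Fin (n + 2),
        (∏ j ∈ Finset.univ.filter (fun j => j < i), c₁ j) * c₂ i *
          (∏ j ∈ Finset.univ.filter (fun j => i < j), (c₁ j + c₂ j * D)))
    = c₂ 0 * (∏ j : Fin (n + 1), (c₁ j.succ + c₂ j.succ * D))
      + c₁ 0 * (∑ i : Fin (n + 1),
          (∏ j ∈ Finset.univ.filter (fun j => j < i), c₁ j.succ) * c₂ i.succ *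
            (∏ j ∈ Finset.univ.filter (fun j => i < j),
              (c₁ j.succ + c₂ j.succ * D))) := by
  rw [Fin.sum_univ_succ]
  congr 1
  · -- i = 0 term
    have h1 : (Finset.univ.filter (fun j : Fin (n+2) => j < 0)) = ∅ := by
      ext j; simp [Fin.not_lt_zero]
    have h2 : (∏ j ∈ Finset.univ.filter (fun j : Fin (n+2) => (0:Fin (n+2)) < j),
        (c₁ j + c₂ j * D)) = ∏ j : Fin (n + 1), (c₁ j.succ + c₂ j.succ * D) := by
      rw [Finset.prod_filter, Fin.prod_univ_succ]
      simp [Fin.succ_pos, ← Finset.prod_filter]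
    rw [h1, h2]; simp
  · rw [Finset.mul_sum]
    apply Finset.sum_congr rfl
    intro i _
    have h1 : (∏ j ∈ Finset.univ.filter (fun j : Fin (n+2) => j < i.succ), c₁ j)
        = c₁ 0 * ∏ j ∈ Finset.univ.filter (fun j : Fin (n+1) => j < i), c₁ j.succ := by
      rw [Finset.prod_filter, Fin.prod_univ_succ]
      simp [Fin.succ_pos, Fin.succ_lt_succ_iff, ← Finset.prod_filter]
    have h2 : (∏ j ∈ Finset.univ.filter (fun j : Fin (n+2) => i.succ < j),
          (c₁ j + c₂ j * D))
        = ∏ j ∈ Finset.univ.filter (fun j : Fin (n+1) => i < j),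
            (c₁ j.succ + c₂ j.succ * D) := by
      rw [Finset.prod_filter, Fin.prod_univ_succ]
      have : ¬ (i.succ < 0) := Fin.not_lt_zero _
      simp [this, Fin.succ_lt_succ_iff, ← Finset.prod_filter]
    rw [h1, h2]; ring

lemma aux_main {U : Type*} [MetricSpace U] {E : Type*} [NormedRing E]
    (D : ℝ) :
    ∀ (n : ℕ) (f h : Fin (n + 1) → U → E) (c₁ c₂ : Fin (n + 1) → ℝ),
      (∀ k, 0 ≤ c₁ k) → (∀ k, 0 ≤ c₂ k) →
      (∀ k x, ‖f k x‖ ≤ c₁ k * ‖h k x‖) →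
      (∀ k x y, ‖f k x - f k y‖ ≤ c₂ k * ‖h k x‖ * dist x y) →
      ∀ x y : U, dist x y ≤ D →
      ‖(List.ofFn fun k => f k x).prod - (List.ofFn fun k => f k y).prod‖ ≤
        (∑ i : Fin (n + 1),
            (∏ j ∈ Finset.univ.filter (fun j => j < i), c₁ j) * c₂ i *
              (∏ j ∈ Finset.univ.filter (fun j => i < j),
                (c₁ j + c₂ j * D))) *
          (∏ i : Fin (n + 1), ‖h i x‖) * dist x y := by
  intro n
  induction n with
  | zero =>
    intro f h c₁ c₂ hc₁ hc₂ hf hlip x y hxy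
    simpa [Finset.prod_filter] using hlip 0 x y
  | succ n ih =>
    intro f h c₁ c₂ hc₁ hc₂ hf hlip x y hxy
    have hD : 0 ≤ D := le_trans dist_nonneg hxy
    set f' : Fin (n+1) → U → E := fun k => f k.succ with hf'
    set h' : Fin (n+1) → U → E := fun k => h k.succ with hh'
    have key := ih f' h' (fun k => c₁ k.succ) (fun k => c₂ k.succ)
      (fun k => hc₁ _) (fun k => hc₂ _) (fun k x => hf _ x)
      (fun k x y => hlip _ x y) x y hxy
    -- bound on the tail product at y
    have hQ : ‖(List.ofFn fun k => f' k y).prod‖ ≤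
        ∏ k : Fin (n+1), ((c₁ k.succ + c₂ k.succ * D) * ‖h' k x‖) := by
      apply aux_prod_norm_le
      intro k
      calc ‖f' k y‖ ≤ ‖f k.succ x‖ + ‖f k.succ x - f k.succ y‖ := by
            simp only [hf']
            have h1 := norm_sub_norm_le (f k.succ y) (f k.succ x)
            have h2 := norm_sub_rev (f k.succ y) (f k.succ x)
            linarith
        _ ≤ c₁ k.succ * ‖h k.succ x‖ + c₂ k.succ * ‖h k.succ x‖ * dist x y :=
            add_le_add (hf _ x) (hlip _ x y)
        _ ≤ (c₁ k.succ + c₂ k.succ * D) * ‖h' k x‖ := by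
            have h1 : c₂ k.succ * ‖h k.succ x‖ * dist x y
                ≤ c₂ k.succ * ‖h k.succ x‖ * D := by
              apply mul_le_mul_of_nonneg_left hxy
              exact mul_nonneg (hc₂ _) (norm_nonneg _)
            simp only [hh']
            nlinarith [norm_nonneg (h k.succ x)]
    -- telescoping for the head
    have hsplit :
        (List.ofFn fun k => f k x).prod - (List.ofFn fun k => f k y).prod
        = (f 0 x - f 0 y) * (List.ofFn fun k => f' k y).prod
          + f 0 x * ((List.ofFn fun k => f' k x).prod
              - (List.ofFn fun k => f' k y).prod) := by
      have e : ∀ g : Fin (n+2) → E,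
          (List.ofFn g).prod = g 0 * (List.ofFn fun k => g k.succ).prod := by
        intro g; rw [List.ofFn_succ, List.prod_cons]
      rw [e (fun k => f k x), e (fun k => f k y)]
      simp only [hf']
      noncomm_ring
    rw [hsplit]
    set P := (List.ofFn fun k => f' k x).prod
    set Q := (List.ofFn fun k => f' k y).prod
    set T := ∏ i : Fin (n+1), ‖h' i x‖ with hT
    have hTnn : 0 ≤ T := Finset.prod_nonneg (fun i _ => norm_nonneg _)
    set Pc := ∏ k : Fin (n+1), (c₁ k.succ + c₂ k.succ * D) with hPc
    have hPcnn : 0 ≤ Pc :=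
      Finset.prod_nonneg fun k _ => by nlinarith [hc₁ k.succ, hc₂ k.succ]
    set C' := ∑ i : Fin (n + 1),
        (∏ j ∈ Finset.univ.filter (fun j => j < i), (fun k : Fin (n+1) => c₁ k.succ) j)
          * c₂ i.succ *
          (∏ j ∈ Finset.univ.filter (fun j => i < j),
            ((fun k : Fin (n+1) => c₁ k.succ) j + (fun k : Fin (n+1) => c₂ k.succ) j * D))
        with hC'
    have hC'nn : 0 ≤ C' := by
      apply Finset.sum_nonneg
      intro i _
      apply mul_nonneg (mul_nonneg ?_ (hc₂ _)) ?_
      · exact Finset.prod_nonneg fun j _ => hc₁ _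
      · exact Finset.prod_nonneg fun j _ => by nlinarith [hc₁ j.succ, hc₂ j.succ]
    have hQ' : ‖Q‖ ≤ Pc * T := by
      rw [hPc, hT, ← Finset.prod_mul_distrib]; exact hQ
    have hkey : ‖P - Q‖ ≤ C' * T * dist x y := key
    have hconst := aux_const_succ n c₁ c₂ D
    calc ‖(f 0 x - f 0 y) * Q + f 0 x * (P - Q)‖
        ≤ ‖(f 0 x - f 0 y) * Q‖ + ‖f 0 x * (P - Q)‖ := norm_add_le _ _
      _ ≤ ‖f 0 x - f 0 y‖ * ‖Q‖ + ‖f 0 x‖ * ‖P - Q‖ :=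
          add_le_add (norm_mul_le _ _) (norm_mul_le _ _)
      _ ≤ (c₂ 0 * ‖h 0 x‖ * dist x y) * (Pc * T)
          + (c₁ 0 * ‖h 0 x‖) * (C' * T * dist x y) := by
          apply add_le_add
          · exact mul_le_mul (hlip 0 x y) hQ' (norm_nonneg _)
              (mul_nonneg (mul_nonneg (hc₂ 0) (norm_nonneg _)) dist_nonneg)
          · exact mul_le_mul (hf 0 x) hkey (norm_nonneg _)
              (mul_nonneg (hc₁ 0) (norm_nonneg _))
      _ = (c₂ 0 * Pc + c₁ 0 * C') * (‖h 0 x‖ * T) * dist x y := by ring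
      _ = (∑ i : Fin (n + 2),
            (∏ j ∈ Finset.univ.filter (fun j => j < i), c₁ j) * c₂ i *
              (∏ j ∈ Finset.univ.filter (fun j => i < j), (c₁ j + c₂ j * D))) *
          (∏ i : Fin (n + 2), ‖h i x‖) * dist x y := by
          rw [hconst, show (∏ i : Fin (n + 2), ‖h i x‖)
              = ‖h 0 x‖ * ∏ i : Fin (n+1), ‖h i.succ x‖ from Fin.prod_univ_succ _]

theorem prod_lipschitz_estimate
    {U : Type*} [MetricSpace U] {E : Type*} [NormedRing E] [CompleteSpace E]
    (hU : Bornology.IsBounded (Set.univ : Set U)) (n : ℕ)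
    (f h : Fin (n + 1) → U → E) (c₁ c₂ : Fin (n + 1) → ℝ)
    (hc₁ : ∀ k, 0 < c₁ k) (hc₂ : ∀ k, 0 < c₂ k)
    (hf : ∀ k x, ‖f k x‖ ≤ c₁ k * ‖h k x‖)
    (hlip : ∀ k x y, ‖f k x - f k y‖ ≤ c₂ k * ‖h k x‖ * dist x y) :
    ∀ x y : U,
      ‖(List.ofFn fun k => f k x).prod - (List.ofFn fun k => f k y).prod‖ ≤
        (∑ i : Fin (n + 1),
            (∏ j ∈ Finset.univ.filter (fun j => j < i), c₁ j) * c₂ i *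
              (∏ j ∈ Finset.univ.filter (fun j => i < j),
                (c₁ j + c₂ j * Metric.diam (Set.univ : Set U)))) *
          (∏ i : Fin (n + 1), ‖h i x‖) * dist x y := by
  intro x y
  exact aux_main (Metric.diam (Set.univ : Set U)) n f h c₁ c₂
    (fun k => (hc₁ k).le) (fun k => (hc₂ k).le) hf hlip x y
    (Metric.dist_le_diam_of_mem hU trivial trivial)
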